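/- Direct-sum decomposition from a ladder of long exact sequences of vector spaces (the abstract form of the decomposition H^{p,q}(X̃) ≅ H^{p,q}(X) ⊕ H^{p,q}(E)/π_E*H^{p,q}(Z) in formula (3.8), used to derive the blow-up formula): Let k be a field, and let ⋯ → A_n --a_n--> B_n --b_n--> C_n --c_n--> A_{n+1} → ⋯ and ⋯ → A'_n --a'_n--> B'_n --b'_n--> C'_n --c'_n--> A'_{n+1} → ⋯ (n ∈ ℤ) be exact sequences of k-vector spaces, with k-linear maps α_n : A_n → A'_n, β_n : B_n → B'_n, γ_n : C_n → C'_n commuting with all horizontal maps. If every α_n is an isomorphism and every β_n and γ_n is injective, then for each n there is an isomorphism of k-vector spaces B'_n ≅ B_n ⊕ (C'_n/γ_n(C_n)). -/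

import Mathlib

/-- Direct-sum decomposition from a ladder of `ℤ`-indexed long exact sequences
of vector spaces: if `α n` are isomorphisms and `β n`, `γ n` are injective,
then `B' n ≅ B n ⊕ (C' n ⧸ γ n (C n))` as `k`-vector spaces. -/
theorem ladder_long_exact_direct_sum {k : Type*} [Field k]
    (A B C A' B' C' : ℤ → Type*)
    [∀ n, AddCommGroup (A n)] [∀ n, Module k (A n)]
    [∀ n, AddCommGroup (B n)] [∀ n, Module k (B n)]
    [∀ n, AddCommGroup (C n)] [∀ n, Module k (C n)]
    [∀ n, AddCommGroup (A' n)] [∀ n, Module k (A' n)]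
    [∀ n, AddCommGroup (B' n)] [∀ n, Module k (B' n)]
    [∀ n, AddCommGroup (C' n)] [∀ n, Module k (C' n)]
    (a : ∀ n, A n →ₗ[k] B n) (b : ∀ n, B n →ₗ[k] C n) (c : ∀ n, C n →ₗ[k] A (n + 1))
    (a' : ∀ n, A' n →ₗ[k] B' n) (b' : ∀ n, B' n →ₗ[k] C' n) (c' : ∀ n, C' n →ₗ[k] A' (n + 1))
    (α : ∀ n, A n →ₗ[k] A' n) (β : ∀ n, B n →ₗ[k] B' n) (γ : ∀ n, C n →ₗ[k] C' n)
    (hexa : ∀ n, LinearMap.range (a n) = LinearMap.ker (b n))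
    (hexb : ∀ n, LinearMap.range (b n) = LinearMap.ker (c n))
    (hexc : ∀ n, LinearMap.range (c n) = LinearMap.ker (a (n + 1)))
    (hexa' : ∀ n, LinearMap.range (a' n) = LinearMap.ker (b' n))
    (hexb' : ∀ n, LinearMap.range (b' n) = LinearMap.ker (c' n))
    (hexc' : ∀ n, LinearMap.range (c' n) = LinearMap.ker (a' (n + 1)))
    (hc1 : ∀ n x, β n (a n x) = a' n (α n x))
    (hc2 : ∀ n x, γ n (b n x) = b' n (β n x))
    (hc3 : ∀ n x, α (n + 1) (c n x) = c' n (γ n x))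
    (hα : ∀ n, Function.Bijective (α n))
    (hβ : ∀ n, Function.Injective (β n))
    (hγ : ∀ n, Function.Injective (γ n))
    (n : ℤ) :
    Nonempty ((B' n) ≃ₗ[k] (B n) × ((C' n) ⧸ LinearMap.range (γ n))) := by

  classical
  set p := LinearMap.range (β n) with hp
  set q := LinearMap.range (γ n) with hq
  -- induced map on cokernels
  have hle : p ≤ LinearMap.ker (q.mkQ.comp (b' n)) := by
    rintro _ ⟨y, rfl⟩
    simp only [LinearMap.mem_ker, LinearMap.comp_apply, Submodule.mkQ_apply,
      Submodule.Quotient.mk_eq_zero]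
    exact ⟨b n y, hc2 n y⟩
  set f := p.liftQ (q.mkQ.comp (b' n)) hle with hf
  have hfinj : Function.Injective f := by
    rw [← LinearMap.ker_eq_bot, LinearMap.ker_eq_bot']
    intro m hm
    obtain ⟨y', rfl⟩ := Submodule.Quotient.mk_surjective p m
    have hm' : (b' n) y' ∈ q := by
      have := hm
      rw [hf] at this
      simpa only [Submodule.liftQ_apply, LinearMap.comp_apply, Submodule.mkQ_apply,
        Submodule.Quotient.mk_eq_zero] using this
    obtain ⟨z, hz⟩ := hm'
    have hcz : c n z = 0 := by
      apply (hα (n+1)).1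
      rw [hc3 n z, hz]
      have : (b' n) y' ∈ LinearMap.ker (c' n) := by
        rw [← hexb' n]; exact ⟨y', rfl⟩
      simpa [map_zero] using this
    have hzmem : z ∈ LinearMap.range (b n) := by
      rw [hexb n]; exact hcz
    obtain ⟨y, hy⟩ := hzmem
    have hker : y' - β n y ∈ LinearMap.ker (b' n) := by
      simp only [LinearMap.mem_ker, map_sub]
      rw [← hc2 n y, hy, hz, sub_self]
    rw [← hexa' n] at hker
    obtain ⟨x', hx'⟩ := hker
    obtain ⟨x, rfl⟩ := (hα n).2 x'
    rw [← hc1 n x] at hx'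
    have : y' ∈ p := ⟨y + a n x, by rw [map_add, hx']; abel⟩
    rwa [Submodule.Quotient.mk_eq_zero]
  have hfsurj : Function.Surjective f := by
    intro zq
    obtain ⟨w, rfl⟩ := Submodule.Quotient.mk_surjective q zq
    obtain ⟨x, hx⟩ := (hα (n+1)).2 (c' n w)
    have hax : a (n + 1) x = 0 := by
      apply hβ (n+1)
      rw [hc1 (n+1) x, hx, map_zero]
      have : c' n w ∈ LinearMap.ker (a' (n+1)) := by
        rw [← hexc' n]; exact ⟨w, rfl⟩
      exact this
    have hxmem : x ∈ LinearMap.range (c n) := by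
      rw [hexc n]; exact hax
    obtain ⟨z, hz⟩ := hxmem
    have hwker : w - γ n z ∈ LinearMap.ker (c' n) := by
      simp only [LinearMap.mem_ker, map_sub]
      rw [← hc3 n z, hz, hx, sub_self]
    rw [← hexb' n] at hwker
    obtain ⟨y', hy'⟩ := hwker
    refine ⟨Submodule.Quotient.mk y', ?_⟩
    rw [hf]
    simp only [Submodule.liftQ_apply, LinearMap.comp_apply, Submodule.mkQ_apply]
    rw [Submodule.Quotient.eq]
    exact ⟨-z, by rw [map_neg, hy']; abel⟩
  let e1 : (B' n ⧸ p) ≃ₗ[k] (C' n ⧸ q) := LinearEquiv.ofBijective f ⟨hfinj, hfsurj⟩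
  obtain ⟨s, hs⟩ := Submodule.exists_isCompl p
  let e2 : B' n ≃ₗ[k] p × s := (Submodule.prodEquivOfIsCompl p s hs).symm
  let e3 : (B n) ≃ₗ[k] p := LinearEquiv.ofInjective (β n) (hβ n)
  let e4 : s ≃ₗ[k] (B' n ⧸ p) := (Submodule.quotientEquivOfIsCompl p s hs).symm
  exact ⟨e2.trans (LinearEquiv.prodCongr e3.symm (e4.trans e1))⟩
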